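/- Let B ⊂ ℝ^d be a polytope and P = B + ℝ₊^d. Then a vertex v of B is a vertex of P if and only if some strictly positive vector w ∈ ℝ₊^d is uniquely minimized over B at v; moreover every vertex of P is a vertex of B. -/

import Mathlib

open scoped Pointwise

/-- Dot product on `ℝ^d`. -/
noncomputable def rdot {d : ℕ} (w x : Fin d → ℝ) : ℝ := ∑ i, w i * x i

/-- `x` is a vertex of `C`: it belongs to `C` and some linear functional is uniquely
minimized over `C` at `x`. -/
def IsVertexOf {d : ℕ} (C : Set (Fin d → ℝ)) (x : Fin d → ℝ) : Prop :=
  x ∈ C ∧ ∃ w : Fin d → ℝ, ∀ y ∈ C, y ≠ x → rdot w x < rdot w y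

lemma rdot_add_right {d : ℕ} (w x y : Fin d → ℝ) :
    rdot w (x + y) = rdot w x + rdot w y := by
  simp [rdot, mul_add, Finset.sum_add_distrib]

lemma rdot_nonneg {d : ℕ} {w r : Fin d → ℝ} (hw : ∀ i, 0 ≤ w i) (hr : ∀ i, 0 ≤ r i) :
    0 ≤ rdot w r :=
  Finset.sum_nonneg fun i _ => mul_nonneg (hw i) (hr i)

lemma rdot_pos {d : ℕ} {w r : Fin d → ℝ} (hw : ∀ i, 0 < w i) (hr : ∀ i, 0 ≤ r i)
    {j : Fin d} (hj : 0 < r j) : 0 < rdot w r := by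
  have h1 : 0 < w j * r j := mul_pos (hw j) hj
  have h2 : w j * r j ≤ rdot w r :=
    Finset.single_le_sum (f := fun i => w i * r i)
      (fun i _ => mul_nonneg (hw i).le (hr i)) (Finset.mem_univ j)
  linarith

lemma rdot_single {d : ℕ} (w : Fin d → ℝ) (i : Fin d) :
    rdot w (Pi.single i 1) = w i := by
  simp [rdot, Pi.single_apply, Finset.sum_ite_eq']

/-- Master lemma for an arbitrary set `B`. -/
lemma key_lemma {d : ℕ} (B : Set (Fin d → ℝ)) :
    (∀ x, IsVertexOf (B + {r : Fin d → ℝ | ∀ i, 0 ≤ r i}) x → IsVertexOf B x) ∧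
    (∀ x, IsVertexOf B x →
      (IsVertexOf (B + {r : Fin d → ℝ | ∀ i, 0 ≤ r i}) x ↔
        ∃ w : Fin d → ℝ, (∀ i, 0 < w i) ∧
          ∀ y ∈ B, y ≠ x → rdot w x < rdot w y)) := by
  -- First: a vertex functional of `P` is strictly positive, and the vertex lies in `B`.
  have main : ∀ x, IsVertexOf (B + {r : Fin d → ℝ | ∀ i, 0 ≤ r i}) x →
      x ∈ B ∧ ∃ w : Fin d → ℝ, (∀ i, 0 < w i) ∧
        ∀ y ∈ B + {r : Fin d → ℝ | ∀ i, 0 ≤ r i}, y ≠ x → rdot w x < rdot w y := by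
    rintro x ⟨hxP, w, hw⟩
    obtain ⟨b, hb, r, hr, hbr⟩ := hxP
    have hwpos : ∀ i, 0 < w i := by
      intro i
      have hmem : x + Pi.single i 1 ∈ B + {r : Fin d → ℝ | ∀ i, 0 ≤ r i} := by
        refine ⟨b, hb, r + Pi.single i 1, ?_, by rw [← hbr]; ext j; simp only [Pi.add_apply]; ring⟩
        intro j
        have h1 := hr j
        have h2 : (0:ℝ) ≤ (Pi.single i 1 : Fin d → ℝ) j := by
          rcases eq_or_ne j i with h | h <;> simp [Pi.single_apply, h]
        simp only [Pi.add_apply]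
        linarith
      have hne : x + Pi.single i 1 ≠ x := by
        intro h
        have := congrFun h i
        simp at this
      have := hw _ hmem hne
      rw [rdot_add_right, rdot_single] at this
      linarith
    have hxB : x = b := by
      by_contra hne
      have hbP : b ∈ B + {r : Fin d → ℝ | ∀ i, 0 ≤ r i} :=
        ⟨b, hb, 0, fun i => le_refl 0, add_zero b⟩
      have hlt := hw b hbP (fun h => hne h.symm)
      have hge : rdot w b ≤ rdot w x := by
        rw [← hbr, rdot_add_right]
        have := rdot_nonneg (fun i => (hwpos i).le) hr
        linarith
      linarith
    exact ⟨hxB ▸ hb, w, hwpos, hw⟩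
  constructor
  · intro x hx
    obtain ⟨hxB, w, hwpos, hw⟩ := main x hx
    refine ⟨hxB, w, fun y hy hne => hw y ⟨y, hy, 0, fun i => le_refl 0, add_zero y⟩ hne⟩
  · intro x hx
    constructor
    · intro hxP
      obtain ⟨hxB, w, hwpos, hw⟩ := main x hxP
      exact ⟨w, hwpos, fun y hy hne => hw y ⟨y, hy, 0, fun i => le_refl 0, add_zero y⟩ hne⟩
    · rintro ⟨w, hwpos, hw⟩
      refine ⟨⟨x, hx.1, 0, fun i => le_refl 0, add_zero x⟩, w, ?_⟩
      rintro y ⟨b, hb, r, hr, rfl⟩ hne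
      rw [rdot_add_right]
      have hrnn : 0 ≤ rdot w r := rdot_nonneg (fun i => (hwpos i).le) hr
      rcases eq_or_ne b x with rfl | hbx
      · have hrne : r ≠ 0 := by
          intro h; apply hne; simp [h]
        obtain ⟨j, hj⟩ := Function.ne_iff.mp hrne
        have : 0 < rdot w r := rdot_pos hwpos hr (lt_of_le_of_ne (hr j) (Ne.symm hj))
        linarith
      · have := hw b hb hbx
        linarith

theorem vertices_of_polytope_plus_orthant {d : ℕ} (S : Set (Fin d → ℝ))
    (hS : S.Finite) :
    (∀ x, IsVertexOf (convexHull ℝ S + {r : Fin d → ℝ | ∀ i, 0 ≤ r i}) x →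
      IsVertexOf (convexHull ℝ S) x) ∧
    (∀ x, IsVertexOf (convexHull ℝ S) x →
      (IsVertexOf (convexHull ℝ S + {r : Fin d → ℝ | ∀ i, 0 ≤ r i}) x ↔
        ∃ w : Fin d → ℝ, (∀ i, 0 < w i) ∧
          ∀ y ∈ convexHull ℝ S, y ≠ x → rdot w x < rdot w y)) :=
  key_lemma (convexHull ℝ S)
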